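/- For any bounded domain Ω ⊆ ℂ^d, pairwise distinct points z₁,…,z_N ∈ Ω, and targets ζ₁,…,ζ_N ∈ 𝔻 not all equal, if there exists a holomorphic f: Ω → 𝔻 with f(z_i) = ζ_i for all i, then t₀ := sup{t > 0 : there is holomorphic g: Ω → 𝔻 with g(z_i) = tζ_i for all i} is attained: there exists a holomorphic F: Ω → 𝔻 with F(z_i) = t₀ζ_i for all i, and the problem z_i ↦ t₀ζ_i is extremal (has no solution with image relatively compact in 𝔻). -/

import Mathlib

open Metric Set Filter Complex Topology

section helpers


variable {E : Type*} [NormedAddCommGroup E] [NormedSpace ℂ E]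

/-- Cauchy-type estimate via the Schwarz lemma: a bounded holomorphic function on a ball
has derivative at the center bounded by `2 * M / r`. -/
lemma lemA {u : E → ℂ} {x : E} {r M : ℝ} (hr : 0 < r)
    (hd : DifferentiableOn ℂ u (ball x r))
    (hb : ∀ w ∈ ball x r, ‖u w‖ ≤ M) :
    ‖fderiv ℂ u x‖ ≤ 2 * M / r := by
  have hM : 0 ≤ M := le_trans (norm_nonneg _) (hb x (mem_ball_self hr))
  have hdiffAt : ∀ w ∈ ball x r, DifferentiableAt ℂ u w := fun w hw =>
    hd.differentiableAt (isOpen_ball.mem_nhds hw)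
  refine ContinuousLinearMap.opNorm_le_bound _ (by positivity) fun v => ?_
  rcases eq_or_ne v 0 with rfl | hv
  · simp
  have hv0 : 0 < ‖v‖ := norm_pos_iff.mpr hv
  set ρ := r / ‖v‖ with hρ
  have hρ0 : 0 < ρ := div_pos hr hv0
  set ψ : ℂ → ℂ := fun lam => u (x + lam • v) with hψ
  have hmem : ∀ lam : ℂ, lam ∈ ball (0:ℂ) ρ → x + lam • v ∈ ball x r := by
    intro lam hlam
    rw [mem_ball, dist_eq_norm] at hlam ⊢
    have : ‖x + lam • v - x‖ = ‖lam‖ * ‖v‖ := by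
      rw [add_sub_cancel_left, norm_smul]
    rw [this]
    have : ‖lam‖ < ρ := by simpa using hlam
    calc ‖lam‖ * ‖v‖ < ρ * ‖v‖ := by exact mul_lt_mul_of_pos_right this hv0
      _ = r := by rw [hρ]; field_simp
  have hDer : ∀ lam ∈ ball (0:ℂ) ρ, HasDerivAt ψ (fderiv ℂ u (x + lam • v) v) lam := by
    intro lam hlam
    have h1 : HasDerivAt (fun s : ℂ => x + s • v) v lam := by
      simpa using ((hasDerivAt_id lam).smul_const v).const_add x
    exact ((hdiffAt _ (hmem lam hlam)).hasFDerivAt.comp_hasDerivAt lam h1)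
  have hψd : DifferentiableOn ℂ ψ (ball 0 ρ) := fun lam hlam =>
    ((hDer lam hlam).differentiableAt).differentiableWithinAt
  have hd0 : HasDerivAt ψ (fderiv ℂ u x v) 0 := by
    simpa using hDer 0 (mem_ball_self hρ0)
  have key : ∀ ε : ℝ, 0 < ε → ‖fderiv ℂ u x v‖ ≤ (2 * M + ε) / ρ := by
    intro ε hε
    have hmaps : Set.MapsTo ψ (ball 0 ρ) (ball (ψ 0) (2 * M + ε)) := by
      intro lam hlam
      rw [mem_ball, dist_eq_norm]
      have h1 : ‖ψ lam‖ ≤ M := hb _ (hmem lam hlam)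
      have h2 : ‖ψ 0‖ ≤ M := hb _ (hmem 0 (mem_ball_self hρ0))
      calc ‖ψ lam - ψ 0‖ ≤ ‖ψ lam‖ + ‖ψ 0‖ := norm_sub_le _ _
        _ < 2 * M + ε := by linarith
    have := Complex.norm_deriv_le_div_of_mapsTo_ball hψd (hmaps.mono_right ball_subset_closedBall) hρ0
    rwa [hd0.deriv] at this
  have h2 : ‖fderiv ℂ u x v‖ ≤ 2 * M / ρ := by
    refine le_of_forall_pos_le_add fun ε hε => ?_
    have := key (ε * ρ) (by positivity)
    calc ‖fderiv ℂ u x v‖ ≤ (2 * M + ε * ρ) / ρ := this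
      _ = 2 * M / ρ + ε := by
          rw [add_div, mul_div_assoc ε ρ ρ, div_self hρ0.ne', mul_one]
  calc ‖fderiv ℂ u x v‖ ≤ 2 * M / ρ := h2
    _ = 2 * M / r * ‖v‖ := by
        rw [hρ, div_div_eq_mul_div, div_mul_eq_mul_div]

/-- Lipschitz estimate for bounded holomorphic functions. -/
lemma lemB {u : E → ℂ} {x₀ : E} {s M : ℝ} (hs : 0 < s)
    (hd : DifferentiableOn ℂ u (ball x₀ (2 * s)))
    (hb : ∀ w ∈ ball x₀ (2 * s), ‖u w‖ ≤ M) :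
    ∀ a ∈ ball x₀ s, ∀ b ∈ ball x₀ s, ‖u a - u b‖ ≤ (2 * M / s) * ‖a - b‖ := by
  have hsub : ball x₀ s ⊆ ball x₀ (2 * s) := ball_subset_ball (by linarith)
  have hder : ∀ p ∈ ball x₀ s, ‖fderiv ℂ u p‖ ≤ 2 * M / s := by
    intro p hp
    have hps : ball p s ⊆ ball x₀ (2 * s) := by
      apply ball_subset_ball'
      have := mem_ball.mp hp
      linarith
    exact lemA hs (hd.mono hps) (fun w hw => hb w (hps hw))
  intro a ha b hb'
  exact (convex_ball x₀ s).norm_image_sub_le_of_norm_fderiv_le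
    (fun p hp => hd.differentiableAt (isOpen_ball.mem_nhds (hsub hp))) hder hb' ha

/-- Lipschitz estimate for derivatives of bounded holomorphic functions. -/
lemma lemC {u : E → ℂ} {x₀ : E} {s M : ℝ} (hs : 0 < s)
    (hd : DifferentiableOn ℂ u (ball x₀ (4 * s)))
    (hb : ∀ w ∈ ball x₀ (4 * s), ‖u w‖ ≤ M) :
    ∀ a ∈ ball x₀ s, ∀ b ∈ ball x₀ s,
      ‖fderiv ℂ u a - fderiv ℂ u b‖ ≤ (2 * M / s ^ 2) * ‖a - b‖ := by
  have h42 : (2:ℝ) * (2 * s) = 4 * s := by ring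
  have hLip := lemB (u := u) (x₀ := x₀) (M := M) (mul_pos two_pos hs)
    (by rw [h42]; exact hd) (by rw [h42]; exact hb)
  have hAt : ∀ w ∈ ball x₀ (4 * s), DifferentiableAt ℂ u w := fun w hw =>
    hd.differentiableAt (isOpen_ball.mem_nhds hw)
  intro a ha b hb'
  set p := a - b with hp
  have hba : b + p = a := by rw [hp]; abel
  have hsub24 : ball x₀ (2 * s) ⊆ ball x₀ (4 * s) := ball_subset_ball (by linarith)
  set v : E → ℂ := fun w => u (w + p) - u w with hv
  have hmem1 : ∀ w ∈ ball b s, w ∈ ball x₀ (2 * s) := by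
    intro w hw
    rw [mem_ball] at hw ⊢
    have h1 : dist b x₀ < s := mem_ball.mp hb'
    calc dist w x₀ ≤ dist w b + dist b x₀ := dist_triangle _ _ _
      _ < 2 * s := by linarith
  have hmem2 : ∀ w ∈ ball b s, w + p ∈ ball x₀ (2 * s) := by
    intro w hw
    rw [mem_ball] at hw ⊢
    have h1 : dist a x₀ < s := mem_ball.mp ha
    have h2 : w + p = (w - b) + a := by rw [hp]; abel
    rw [h2]
    calc dist (w - b + a) x₀ ≤ ‖w - b‖ + dist a x₀ := by
          rw [dist_eq_norm, dist_eq_norm]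
          calc ‖w - b + a - x₀‖ = ‖(w - b) + (a - x₀)‖ := by rw [add_sub_assoc]
            _ ≤ ‖w - b‖ + ‖a - x₀‖ := norm_add_le _ _
      _ < 2 * s := by
          have : ‖w - b‖ < s := by rw [← dist_eq_norm]; exact hw
          linarith
  have hvHas : ∀ w, w + p ∈ ball x₀ (4 * s) → w ∈ ball x₀ (4 * s) →
      HasFDerivAt v (fderiv ℂ u (w + p) - fderiv ℂ u w) w := by
    intro w h1 h2
    have hu1 : HasFDerivAt u (fderiv ℂ u (w + p)) (w + p) := (hAt _ h1).hasFDerivAt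
    have ht : HasFDerivAt (fun q : E => q + p) (ContinuousLinearMap.id ℂ E) w :=
      (hasFDerivAt_id w).add_const p
    have hcomp := hu1.comp w ht
    rw [ContinuousLinearMap.comp_id] at hcomp
    exact HasFDerivAt.sub (by exact hcomp) (hAt _ h2).hasFDerivAt
  have hvd : DifferentiableOn ℂ v (ball b s) := by
    intro w hw
    exact ((hvHas w (hsub24 (hmem2 w hw)) (hsub24 (hmem1 w hw))).differentiableAt).differentiableWithinAt
  have hvb : ∀ w ∈ ball b s, ‖v w‖ ≤ (2 * M / (2 * s)) * ‖p‖ := by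
    intro w hw
    have := hLip (w + p) (hmem2 w hw) w (hmem1 w hw)
    simpa [add_sub_cancel_left] using this
  have hkey := lemA hs hvd hvb
  have hfv : fderiv ℂ v b = fderiv ℂ u a - fderiv ℂ u b := by
    have := hvHas b (by rw [hba]; exact (ball_subset_ball (by linarith : s ≤ 4 * s)) ha)
      ((ball_subset_ball (by linarith : s ≤ 4 * s)) hb')
    rw [hba] at this
    exact this.fderiv
  rw [hfv] at hkey
  calc ‖fderiv ℂ u a - fderiv ℂ u b‖ ≤ 2 * (2 * M / (2 * s) * ‖p‖) / s := hkey
    _ = 2 * M / s ^ 2 * ‖a - b‖ := by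
        field_simp
        ring

end helpers


/-- Pointwise convergence along a filter plus a uniform Lipschitz bound on a totally bounded
set gives uniform convergence on that set. -/
lemma lemU {X E' : Type*} [NormedAddCommGroup X] [NormedAddCommGroup E']
    {ι : Type*} {φ : Filter ι} [φ.NeBot] {s : Set X} (hs : TotallyBounded s)
    {u : ι → X → E'} {f : X → E'} {L : ℝ}
    (hLip : ∀ n, ∀ a ∈ s, ∀ b ∈ s, ‖u n a - u n b‖ ≤ L * ‖a - b‖)
    (hpt : ∀ a ∈ s, Tendsto (fun n => u n a) φ (𝓝 (f a))) :
    TendstoUniformlyOn u f φ s := by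
  rw [Metric.tendstoUniformlyOn_iff]
  intro ε hε
  set L1 := max L 1 with hL1
  have hL1pos : 0 < L1 := lt_of_lt_of_le one_pos (le_max_right _ _)
  have hLip1 : ∀ n, ∀ a ∈ s, ∀ b ∈ s, dist (u n a) (u n b) ≤ L1 * dist a b := by
    intro n a ha b hb
    rw [dist_eq_norm, dist_eq_norm]
    exact (hLip n a ha b hb).trans
      (mul_le_mul_of_nonneg_right (le_max_left _ _) (norm_nonneg _))
  set δ := ε / (4 * L1) with hδ
  have hδ0 : 0 < δ := by positivity
  obtain ⟨C, hCs, hCfin, hCcover⟩ := (totallyBounded_iff_subset.mp hs)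
    {p : X × X | dist p.1 p.2 < δ} (Metric.dist_mem_uniformity hδ0)
  have hflip : ∀ a ∈ s, ∀ b ∈ s, dist (f a) (f b) ≤ L1 * dist a b := by
    intro a ha b hb
    have h1 : Tendsto (fun n => dist (u n a) (u n b)) φ (𝓝 (dist (f a) (f b))) :=
      (hpt a ha).dist (hpt b hb)
    exact le_of_tendsto h1 (Eventually.of_forall fun n => hLip1 n a ha b hb)
  have hev : ∀ᶠ n in φ, ∀ c ∈ C, dist (f c) (u n c) < ε / 3 := by
    rw [eventually_all_finite hCfin]
    intro c hc
    have := (hpt c (hCs hc))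
    rw [Metric.tendsto_nhds] at this
    filter_upwards [this (ε / 3) (by positivity)] with n hn
    rw [dist_comm]
    exact hn
  filter_upwards [hev] with n hn a ha
  obtain ⟨c, hcC, hac⟩ : ∃ c ∈ C, dist a c < δ := by
    have := hCcover ha
    simp only [mem_iUnion] at this
    obtain ⟨c, hc, hmem⟩ := this
    exact ⟨c, hc, hmem⟩
  have hcs : c ∈ s := hCs hcC
  have h1 : dist (f a) (f c) ≤ L1 * δ := by
    calc dist (f a) (f c) ≤ L1 * dist a c := hflip a ha c hcs
      _ ≤ L1 * δ := by nlinarith [hac]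
  have h2 : dist (u n c) (u n a) ≤ L1 * δ := by
    calc dist (u n c) (u n a) ≤ L1 * dist c a := hLip1 n c hcs a ha
      _ ≤ L1 * δ := by rw [dist_comm]; nlinarith [hac]
  have hL1δ : L1 * δ = ε / 4 := by
    rw [hδ]; field_simp
  calc dist (f a) (u n a) ≤ dist (f a) (f c) + dist (f c) (u n c) + dist (u n c) (u n a) :=
        dist_triangle4 _ _ _ _
    _ < ε / 4 + ε / 3 + ε / 4 := by
        have := hn c hcC
        rw [hL1δ] at h1 h2
        linarith
    _ < ε := by linarith

theorem stmt19 (d N : ℕ) (hN : 2 ≤ N)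
    (Ω : Set (Fin d → ℂ)) (hΩo : IsOpen Ω) (hΩc : IsConnected Ω)
    (hΩb : Bornology.IsBounded Ω)
    (z : Fin N → (Fin d → ℂ)) (hz : Function.Injective z) (hzΩ : ∀ i, z i ∈ Ω)
    (ζ : Fin N → ℂ) (hζ : ∀ i, ‖ζ i‖ < 1)
    (hζne : ∃ i j, ζ i ≠ ζ j)
    (hsol : ∃ f : (Fin d → ℂ) → ℂ, DifferentiableOn ℂ f Ω ∧
      Set.MapsTo f Ω (Metric.ball (0:ℂ) 1) ∧ ∀ i, f (z i) = ζ i)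
    (t₀ : ℝ)
    (ht₀ : t₀ = sSup {t : ℝ | 0 < t ∧ ∃ g : (Fin d → ℂ) → ℂ, DifferentiableOn ℂ g Ω ∧
      Set.MapsTo g Ω (Metric.ball (0:ℂ) 1) ∧ ∀ i, g (z i) = (t:ℂ) * ζ i}) :
    (∃ F : (Fin d → ℂ) → ℂ, DifferentiableOn ℂ F Ω ∧
      Set.MapsTo F Ω (Metric.ball (0:ℂ) 1) ∧ ∀ i, F (z i) = (t₀:ℂ) * ζ i) ∧
    ¬ ∃ G : (Fin d → ℂ) → ℂ, DifferentiableOn ℂ G Ω ∧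
      Set.MapsTo G Ω (Metric.ball (0:ℂ) 1) ∧
      IsCompact (closure (G '' Ω)) ∧ closure (G '' Ω) ⊆ Metric.ball (0:ℂ) 1 ∧
      ∀ i, G (z i) = (t₀:ℂ) * ζ i := by
  classical
  set S : Set ℝ := {t : ℝ | 0 < t ∧ ∃ g : (Fin d → ℂ) → ℂ, DifferentiableOn ℂ g Ω ∧
      Set.MapsTo g Ω (Metric.ball (0:ℂ) 1) ∧ ∀ i, g (z i) = (t:ℂ) * ζ i} with hSdef
  obtain ⟨f0, hf0d, hf0m, hf0i⟩ := hsol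
  have h1S : (1:ℝ) ∈ S := by
    refine ⟨one_pos, f0, hf0d, hf0m, fun i => ?_⟩
    rw [hf0i i]; push_cast; ring
  obtain ⟨i0, hi0⟩ : ∃ i, ζ i ≠ 0 := by
    obtain ⟨i, j, hij⟩ := hζne
    by_cases h : ζ i = 0
    · exact ⟨j, fun hj => hij (by rw [h, hj])⟩
    · exact ⟨i, h⟩
  have hi0n : 0 < ‖ζ i0‖ := norm_pos_iff.mpr hi0
  have hbdd : BddAbove S := by
    refine ⟨‖ζ i0‖⁻¹, fun τ hτ => ?_⟩
    obtain ⟨hτ0, g, hgd, hgm, hgi⟩ := hτ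
    have h1 : ‖g (z i0)‖ < 1 := mem_ball_zero_iff.mp (hgm (hzΩ i0))
    rw [hgi i0, norm_mul, Complex.norm_real, Real.norm_eq_abs, abs_of_pos hτ0] at h1
    rw [← one_div, le_div_iff₀ hi0n]
    exact h1.le
  have ht₀1 : (1:ℝ) ≤ t₀ := by rw [ht₀]; exact le_csSup hbdd h1S
  have ht₀0 : (0:ℝ) < t₀ := lt_of_lt_of_le one_pos ht₀1
  -- Part 2: no solution with relatively compact image in the disc
  have part2 : ¬ ∃ G : (Fin d → ℂ) → ℂ, DifferentiableOn ℂ G Ω ∧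
      Set.MapsTo G Ω (Metric.ball (0:ℂ) 1) ∧
      IsCompact (closure (G '' Ω)) ∧ closure (G '' Ω) ⊆ Metric.ball (0:ℂ) 1 ∧
      ∀ i, G (z i) = (t₀:ℂ) * ζ i := by
    rintro ⟨G, hGd, hGm, hGk, hGs, hGi⟩
    obtain ⟨x0, hx0⟩ := hΩc.nonempty
    have hKne : (closure (G '' Ω)).Nonempty := ⟨G x0, subset_closure ⟨x0, hx0, rfl⟩⟩
    obtain ⟨w0, hw0K, hw0max⟩ :=
      hGk.exists_isMaxOn hKne (continuous_norm.continuousOn)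
    set ρ := ‖w0‖ with hρ
    have hρ1 : ρ < 1 := mem_ball_zero_iff.mp (hGs hw0K)
    have hρ0 : (0:ℝ) ≤ ρ := norm_nonneg _
    set c : ℝ := 2 / (1 + ρ) with hc
    have hc1 : 1 < c := by
      rw [hc, lt_div_iff₀ (by linarith)]; linarith
    have hc0 : 0 < c := lt_trans one_pos hc1
    have hmem : c * t₀ ∈ S := by
      refine ⟨mul_pos hc0 ht₀0, fun x => (c:ℂ) * G x, ?_, ?_, ?_⟩
      · exact (differentiableOn_const _).mul hGd
      · intro x hx
        rw [mem_ball_zero_iff, norm_mul, Complex.norm_real, Real.norm_eq_abs,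
          abs_of_pos hc0]
        have hGx : ‖G x‖ ≤ ρ := hw0max (subset_closure ⟨x, hx, rfl⟩)
        have : c * ρ < 1 := by
          rw [hc, div_mul_eq_mul_div, div_lt_one (by linarith)]; linarith
        nlinarith [norm_nonneg (G x)]
      · intro i
        show (c:ℂ) * G (z i) = _
        rw [hGi i]; push_cast; ring
    have hle : c * t₀ ≤ sSup S := le_csSup hbdd hmem
    rw [← ht₀] at hle
    nlinarith
  -- Part 1: existence of an extremal solution
  obtain ⟨t, htmono, htlim, htS⟩ := exists_seq_tendsto_sSup ⟨1, h1S⟩ hbdd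
  rw [← ht₀] at htlim
  choose htpos g hgd hgm hgi using htS
  set 𝒰 : Ultrafilter ℕ := Ultrafilter.of atTop with h𝒰
  have h𝒰le : (𝒰 : Filter ℕ) ≤ atTop := Ultrafilter.of_le _
  have hgb : ∀ n, ∀ x ∈ Ω, ‖g n x‖ ≤ 1 := fun n x hx =>
    (mem_ball_zero_iff.mp (hgm n hx)).le
  have hgAt : ∀ n, ∀ x ∈ Ω, DifferentiableAt ℂ (g n) x := fun n x hx =>
    (hgd n).differentiableAt (hΩo.mem_nhds hx)
  -- radii
  have hrad : ∀ x ∈ Ω, ∃ r : ℝ, 0 < r ∧ Metric.ball x (4*r) ⊆ Ω := by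
    intro x hx
    obtain ⟨R, hR0, hRs⟩ := Metric.isOpen_iff.mp hΩo x hx
    exact ⟨R/5, by positivity, (Metric.ball_subset_ball (by linarith)).trans hRs⟩
  -- pointwise ultrafilter limit of the functions
  have hFex : ∀ x : Fin d → ℂ, ∃ a : ℂ, x ∈ Ω →
      Tendsto (fun n => g n x) (𝒰 : Filter ℕ) (𝓝 a) := by
    intro x
    by_cases hx : x ∈ Ω
    · obtain ⟨a, -, ha⟩ := (isCompact_closedBall (0:ℂ) 1).ultrafilter_le_nhds
        (𝒰.map fun n => g n x) (by
          rw [Ultrafilter.coe_map, Filter.le_principal_iff, Filter.mem_map]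
          exact Filter.univ_mem' fun n => ball_subset_closedBall (hgm n hx))
      rw [Ultrafilter.coe_map] at ha
      exact ⟨a, fun _ => ha⟩
    · exact ⟨0, fun h => absurd h hx⟩
  choose F hF using hFex
  -- pointwise ultrafilter limit of the derivatives
  haveI : ProperSpace ((Fin d → ℂ) →L[ℂ] ℂ) := FiniteDimensional.proper ℂ _
  have hhex : ∀ x : Fin d → ℂ, ∃ a : (Fin d → ℂ) →L[ℂ] ℂ, x ∈ Ω →
      Tendsto (fun n => fderiv ℂ (g n) x) (𝒰 : Filter ℕ) (𝓝 a) := by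
    intro x
    by_cases hx : x ∈ Ω
    · obtain ⟨r, hr0, hrs⟩ := hrad x hx
      have hsub : Metric.ball x r ⊆ Ω := (Metric.ball_subset_ball (by linarith)).trans hrs
      have hbd : ∀ n, fderiv ℂ (g n) x ∈
          Metric.closedBall (0 : (Fin d → ℂ) →L[ℂ] ℂ) (2/r) := by
        intro n
        rw [Metric.mem_closedBall, dist_zero_right]
        have := lemA hr0 ((hgd n).mono hsub) (fun w hw => hgb n w (hsub hw))
        calc ‖fderiv ℂ (g n) x‖ ≤ 2 * 1 / r := this
          _ = 2 / r := by ring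
      obtain ⟨a, -, ha⟩ := (isCompact_closedBall
          (0 : (Fin d → ℂ) →L[ℂ] ℂ) (2/r)).ultrafilter_le_nhds
        (𝒰.map fun n => fderiv ℂ (g n) x) (by
          rw [Ultrafilter.coe_map, Filter.le_principal_iff, Filter.mem_map]
          exact Filter.univ_mem' hbd)
      rw [Ultrafilter.coe_map] at ha
      exact ⟨a, fun _ => ha⟩
    · exact ⟨0, fun h => absurd h hx⟩
  choose h hh using hhex
  -- locally uniform convergence of the functions
  have hTLUg : TendstoLocallyUniformlyOn (fun n => g n) F (𝒰 : Filter ℕ) Ω := by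
    intro q hq x hx
    obtain ⟨r, hr0, hrs⟩ := hrad x hx
    have hsub2 : Metric.ball x (2*r) ⊆ Ω :=
      (Metric.ball_subset_ball (by linarith)).trans hrs
    have hsub1 : Metric.ball x r ⊆ Ω :=
      (Metric.ball_subset_ball (by linarith)).trans hrs
    have hLip : ∀ n, ∀ a ∈ Metric.ball x r, ∀ b ∈ Metric.ball x r,
        ‖g n a - g n b‖ ≤ (2 * 1 / r) * ‖a - b‖ := fun n =>
      lemB hr0 ((hgd n).mono hsub2) (fun w hw => hgb n w (hsub2 hw))
    have htb : TotallyBounded (Metric.ball x r) :=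
      (isCompact_closedBall x r).totallyBounded.subset Metric.ball_subset_closedBall
    have hTU := lemU htb hLip (fun a ha => hF a (hsub1 ha))
    exact ⟨Metric.ball x r,
      mem_nhdsWithin_of_mem_nhds (Metric.ball_mem_nhds x hr0), hTU q hq⟩
  -- locally uniform convergence of the derivatives
  have hTLUh : TendstoLocallyUniformlyOn (fun n => fderiv ℂ (g n)) h (𝒰 : Filter ℕ) Ω := by
    intro q hq x hx
    obtain ⟨r, hr0, hrs⟩ := hrad x hx
    have hsub1 : Metric.ball x r ⊆ Ω :=
      (Metric.ball_subset_ball (by linarith)).trans hrs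
    have hLip : ∀ n, ∀ a ∈ Metric.ball x r, ∀ b ∈ Metric.ball x r,
        ‖fderiv ℂ (g n) a - fderiv ℂ (g n) b‖ ≤ (2 * 1 / r ^ 2) * ‖a - b‖ := fun n =>
      lemC hr0 ((hgd n).mono hrs) (fun w hw => hgb n w (hrs hw))
    have htb : TotallyBounded (Metric.ball x r) :=
      (isCompact_closedBall x r).totallyBounded.subset Metric.ball_subset_closedBall
    have hTU := lemU htb hLip (fun a ha => hh a (hsub1 ha))
    exact ⟨Metric.ball x r,
      mem_nhdsWithin_of_mem_nhds (Metric.ball_mem_nhds x hr0), hTU q hq⟩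
  -- F is holomorphic
  have hFder : ∀ x ∈ Ω, HasFDerivAt F (h x) x := fun x hx =>
    hasFDerivAt_of_tendstoLocallyUniformlyOn hΩo hTLUh
      (fun n y hy => (hgAt n y hy).hasFDerivAt) (fun y hy => hF y hy) hx
  have hFd : DifferentiableOn ℂ F Ω := fun x hx =>
    ((hFder x hx).differentiableAt).differentiableWithinAt
  -- interpolation values
  have hFi : ∀ i, F (z i) = (t₀:ℂ) * ζ i := by
    intro i
    have h2 : Tendsto (fun n => ((t n : ℝ):ℂ) * ζ i) atTop (𝓝 ((t₀:ℂ) * ζ i)) := by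
      have h3 : Tendsto (fun n => ((t n : ℝ):ℂ)) atTop (𝓝 ((t₀:ℝ):ℂ)) :=
        (Complex.continuous_ofReal.tendsto _).comp htlim
      exact h3.mul tendsto_const_nhds
    have h4 : Tendsto (fun n => g n (z i)) (𝒰 : Filter ℕ) (𝓝 ((t₀:ℂ) * ζ i)) := by
      have h5 : (fun n => g n (z i)) = fun n => ((t n : ℝ):ℂ) * ζ i :=
        funext fun n => hgi n i
      rw [h5]
      exact h2.mono_left h𝒰le
    exact tendsto_nhds_unique (hF (z i) (hzΩ i)) h4
  -- F maps into the open unit ball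
  have hFle : ∀ x ∈ Ω, ‖F x‖ ≤ 1 := fun x hx =>
    le_of_tendsto (hF x hx).norm (Eventually.of_forall fun n => hgb n x hx)
  have hFm : Set.MapsTo F Ω (Metric.ball (0:ℂ) 1) := by
    intro x hx
    rw [mem_ball_zero_iff]
    rcases lt_or_eq_of_le (hFle x hx) with hlt | heq
    · exact hlt
    · exfalso
      have hmax : IsMaxOn (norm ∘ F) Ω x := fun y hy => by
        simp only [Function.comp_apply]
        rw [← heq] at hFle
        exact hFle y hy
      have hEq := Complex.eqOn_of_isPreconnected_of_isMaxOn_norm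
        hΩc.isPreconnected hΩo hFd hx hmax
      obtain ⟨i, j, hij⟩ := hζne
      have hEi := hEq (hzΩ i)
      have hEj := hEq (hzΩ j)
      rw [hFi i] at hEi
      rw [hFi j] at hEj
      apply hij
      have ht₀ne : ((t₀:ℝ):ℂ) ≠ 0 := Complex.ofReal_ne_zero.mpr ht₀0.ne'
      exact mul_left_cancel₀ ht₀ne (hEi.trans hEj.symm)
  exact ⟨⟨F, hFd, hFm, hFi⟩, part2⟩
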